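/- For n ≥ 2, the permutation 2 3 ⋯ n 1 requires exactly n-1 applications of the pop-stack sorting operator P to be sorted: P^{n-1}(23⋯n1) is the identity, but P^{n-2}(23⋯n1) is not. -/

import Mathlib

/-- Flip operator `F`: simultaneously reverse every (automatically pairwise disjoint)
`10` factor, i.e. every zero immediately preceded by a one swaps with that one.
Here `false` plays the role of `0` and `true` of `1`. -/
def flipWord : List Bool → List Bool
  | true :: false :: rest => false :: true :: flipWord rest
  | a :: rest => a :: flipWord rest
  | [] => []

/-- The positions (indices) of the zeros (`false`) of a binary word, left to right. -/
def zeroPositions (w : List Bool) : List ℕ :=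
  (List.range w.length).filter (fun i => w.getD i true = false)

/-- `u ⊴ v` : for every `i`, the `i`-th zero of `u` occurs at a position at most
that of the `i`-th zero of `v`. -/
def WLE (u v : List Bool) : Prop :=
  List.Forall₂ (· ≤ ·) (zeroPositions u) (zeroPositions v)

/-- One tumble move: choose pairwise non-overlapping factors of the form `1^+0^+`
covering every `10` factor, and reverse each in place. `Tumble w u` means `u ∈ T(w)`. -/
inductive Tumble : List Bool → List Bool → Prop
  | nil : Tumble [] []
  | zero {w u} : Tumble w u → Tumble (false :: w) (false :: u)
  | one {w u} : Tumble w u → w.head? ≠ some false → Tumble (true :: w) (true :: u)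
  | block {w u} (a b : ℕ) : 0 < a → 0 < b → Tumble w u →
      Tumble (List.replicate a true ++ List.replicate b false ++ w)
             (List.replicate b false ++ List.replicate a true ++ u)

/-- `TumbleN t w u` : `u` is reachable from `w` by exactly `t` tumble moves. -/
def TumbleN : ℕ → List Bool → List Bool → Prop
  | 0 => Eq
  | t + 1 => fun w u => ∃ v, TumbleN t w v ∧ Tumble v u

/-- The 0/1 projection at threshold `k`: the `i`-th letter is `0` iff `w(i) < k`. -/
def proj (k : ℕ) (w : List ℕ) : List Bool := w.map (fun x => decide (k ≤ x))

/-- Pop-stack operator `P`: partition into maximal strictly decreasing runs and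
reverse each run in place. -/
def popStack (w : List ℕ) : List ℕ :=
  ((w.splitBy (fun a b => decide (b < a))).map List.reverse).flatten


namespace List

private theorem splitByLoop_eq_append' {α : Type*} {r : α → α → Bool} {l : List α} {a : α} {g : List α}
    (gs : List (List α)) : splitBy.loop r l a g gs = gs.reverse ++ splitBy.loop r l a g [] := by
  induction l generalizing a g gs with
  | nil => simp [splitBy.loop]
  | cons b l IH =>
    simp_rw [splitBy.loop]
    split <;> rw [IH]
    conv_rhs => rw [IH]
    simp

theorem splitBy_cons_of_false {α : Type*} (r : α → α → Bool) (a b : α) (l : List α)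
    (h : r a b = false) : splitBy r (a :: b :: l) = [a] :: splitBy r (b :: l) := by
  show splitBy.loop r (b :: l) a [] [] = _
  rw [splitBy.loop, h]
  show splitBy.loop r l b [] [[a]] = _
  rw [splitByLoop_eq_append']
  rfl

theorem splitBy_cons_cons {α : Type*} (r : α → α → Bool) (a b : α) (l : List α)
    (h : r a b = true) (h2 : ∀ c ∈ l.head?, r b c = false) :
    splitBy r (a :: b :: l) = [a, b] :: splitBy r l := by
  show splitBy.loop r (b :: l) a [] [] = _
  rw [splitBy.loop, h]
  cases l with
  | nil => rfl
  | cons c l' =>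
    show splitBy.loop r (c :: l') b [a] [] = _
    rw [splitBy.loop, h2 c rfl]
    show splitBy.loop r l' c [] [[a,b]] = _
    rw [splitByLoop_eq_append']
    rfl

end List

theorem popStack_nil : popStack [] = [] := rfl

theorem popStack_singleton (a : ℕ) : popStack [a] = [a] := rfl

theorem popStack_cons_le {a b : ℕ} (h : a ≤ b) (l : List ℕ) :
    popStack (a :: b :: l) = a :: popStack (b :: l) := by
  unfold popStack
  rw [List.splitBy_cons_of_false _ a b l (by simp [Nat.not_lt.2 h])]
  simp

theorem popStack_two {a b : ℕ} (h : b < a) (l : List ℕ)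
    (h2 : ∀ c ∈ l.head?, b ≤ c) :
    popStack (a :: b :: l) = b :: a :: popStack l := by
  unfold popStack
  rw [List.splitBy_cons_cons _ a b l (by simp [h])
    (fun c hc => by simp [Nat.not_lt.2 (h2 c hc)])]
  simp

theorem popStack_range' (t s : ℕ) : popStack (List.range' s t) = List.range' s t := by
  induction t generalizing s with
  | zero => rfl
  | succ t IH =>
    cases t with
    | zero => rfl
    | succ t =>
      rw [List.range'_succ, List.range'_succ]
      rw [popStack_cons_le (Nat.le_succ s), ← List.range'_succ, IH]

/-- One pop-stack pass on `2 ⋯ (a+m) 1 (a+m+2) ⋯`. -/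
theorem popStack_step (m t : ℕ) : ∀ a, 2 ≤ a →
    popStack (List.range' a (m + 1) ++ 1 :: List.range' (a + m + 1) t) =
      List.range' a m ++ 1 :: List.range' (a + m) (t + 1) := by
  induction m with
  | zero =>
    intro a ha
    rw [List.range'_one]
    show popStack (a :: 1 :: List.range' (a + 1) t) = _
    rw [popStack_two (by omega) _ (fun c hc => ?_), popStack_range']
    · simp [List.range'_succ]
    · cases t with
      | zero => simp at hc
      | succ t =>
        rw [List.range'_succ] at hc
        simp at hc
        omega
  | succ m IH =>
    intro a ha
    rw [show m + 1 + 1 = m + 2 from rfl, List.range'_succ, List.range'_succ]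
    rw [List.cons_append, List.cons_append, popStack_cons_le (Nat.le_succ a),
      ← List.cons_append, ← List.range'_succ]
    rw [show a + (m + 1) + 1 = (a + 1) + m + 1 by omega, IH (a + 1) (by omega)]
    rw [List.range'_succ, show a + (m + 1) = a + 1 + m by omega,
      List.range'_succ (s := a) (n := m), List.range'_succ (s := a + 1 + m) (n := t)]
    simp

/-- `k` passes on the state with prefix `2 ⋯ (m+k+1)`. -/
theorem popStack_iter (k : ℕ) : ∀ m t,
    popStack^[k] (List.range' 2 (m + k) ++ 1 :: List.range' (m + k + 2) t) =
      List.range' 2 m ++ 1 :: List.range' (m + 2) (t + k) := by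
  induction k with
  | zero => intro m t; rfl
  | succ k IH =>
    intro m t
    rw [Function.iterate_succ_apply]
    rw [show m + (k + 1) = (m + k) + 1 by omega,
      show (m + k) + 1 + 2 = 2 + (m + k) + 1 by omega,
      popStack_step (m + k) t 2 le_rfl]
    rw [show 2 + (m + k) = m + k + 2 by omega, IH m (t + 1),
      show t + 1 + k = t + (k + 1) by omega]

theorem stmt6' (n : ℕ) (hn : 2 ≤ n) :
    popStack^[n - 1] (List.range' 2 (n - 1) ++ [1]) = List.range' 1 n ∧
    popStack^[n - 2] (List.range' 2 (n - 1) ++ [1]) ≠ List.range' 1 n := by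
  obtain ⟨N, rfl⟩ : ∃ N, n = N + 2 := ⟨n - 2, by omega⟩
  constructor
  · rw [show N + 2 - 1 = N + 1 from rfl,
      show List.range' 2 (N + 1) ++ [1] =
        List.range' 2 (0 + (N + 1)) ++ 1 :: List.range' (0 + (N + 1) + 2) 0 from by simp,
      popStack_iter (N + 1) 0 0]
    rw [List.range'_succ (s := 1) (n := N + 1)]
    simp
  · rw [show N + 2 - 2 = N from rfl, show N + 2 - 1 = N + 1 from rfl,
      show List.range' 2 (N + 1) ++ [1] =
        List.range' 2 (1 + N) ++ 1 :: List.range' (1 + N + 2) 0 from by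
          rw [Nat.add_comm 1 N]; simp,
      popStack_iter N 1 0]
    intro h
    rw [List.range'_succ (s := 1) (n := N + 1), List.range'_succ (s := 2)] at h
    simp at h

/-- The permutation `2 3 ⋯ n 1` requires exactly `n-1` pop-stack passes to sort. -/
theorem stmt6 (n : ℕ) (hn : 2 ≤ n) :
    popStack^[n - 1] (List.range' 2 (n - 1) ++ [1]) = List.range' 1 n ∧
    popStack^[n - 2] (List.range' 2 (n - 1) ++ [1]) ≠ List.range' 1 n := by
  exact stmt6' n hn
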